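/- No term of the ECHO sequence is divisible by 5: for every n ≥ 0, 5 does not divide b n. Moreover the sequence is periodic modulo 5 with period 24: for every n ≥ 0, 5 divides b (n+24) − b n. -/

import Mathlib

/-- The ECHO sequence. -/
def echo : ℕ → ℚ
  | 0 => 1
  | 1 => 1
  | 2 => 2
  | 3 => 1
  | n + 4 =>
      (echo (n + 3) * echo (n + 1) - (if 3 ∣ (n + 4) then 3 else 1) * echo (n + 2) ^ 2) /
        echo n


def f5 : ℕ → ZMod 5 := fun k =>
  [1,1,2,1,2,3,3,2,1,2,1,1,4,4,3,4,3,2,2,3,4,3,4,4].getD k 0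

def fInv : ℕ → ℤ := fun k =>
  [1,1,3,1,3,2,2,3,1,3,1,1,4,4,2,4,2,3,3,2,4,2,4,4].getD k 0

lemma f5_ne : ∀ k < 24, f5 k ≠ 0 := by decide
lemma fInv_mul : ∀ k < 24, ((fInv k : ℤ) : ZMod 5) * f5 k = 1 := by decide
lemma f5_rec : ∀ k < 24,
    (f5 ((k+3)%24) * f5 ((k+1)%24) - (if (k+4)%3 = 0 then (3:ZMod 5) else 1) * f5 ((k+2)%24)^2)
      * ((fInv k : ℤ):ZMod 5) = f5 ((k+4)%24) := by decide

def EInv (n : ℕ) : Prop :=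
  ∃ a b : ℤ, echo n = (a:ℚ)/(b:ℚ) ∧ (a : ZMod 5) = f5 (n % 24) ∧ (b : ZMod 5) = 1

lemma cast_ne_of_zmod {b : ℤ} (h : (b : ZMod 5) ≠ 0) : b ≠ 0 := by
  intro hb; subst hb; simp at h

lemma one_ne : (1 : ZMod 5) ≠ 0 := by decide

lemma step (n : ℕ) (h0 : EInv n) (h1 : EInv (n+1)) (h2 : EInv (n+2)) (h3 : EInv (n+3)) :
    EInv (n+4) := by
  obtain ⟨a0, b0, e0, ha0, hb0⟩ := h0
  obtain ⟨a1, b1, e1, ha1, hb1⟩ := h1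
  obtain ⟨a2, b2, e2, ha2, hb2⟩ := h2
  obtain ⟨a3, b3, e3, ha3, hb3⟩ := h3
  have hm : n % 24 < 24 := Nat.mod_lt _ (by norm_num)
  have hb0' : b0 ≠ 0 := cast_ne_of_zmod (hb0 ▸ one_ne)
  have hb1' : b1 ≠ 0 := cast_ne_of_zmod (hb1 ▸ one_ne)
  have hb2' : b2 ≠ 0 := cast_ne_of_zmod (hb2 ▸ one_ne)
  have hb3' : b3 ≠ 0 := cast_ne_of_zmod (hb3 ▸ one_ne)
  have ha0' : a0 ≠ 0 := cast_ne_of_zmod (ha0 ▸ f5_ne _ hm)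
  have hu : ((fInv (n % 24) : ℤ) : ZMod 5) * f5 (n % 24) = 1 := fInv_mul _ hm
  have hu' : fInv (n % 24) ≠ 0 := by
    apply cast_ne_of_zmod; intro h; rw [h, zero_mul] at hu; exact one_ne hu.symm
  -- the coefficient
  set cz : ℤ := if (n % 24 + 4) % 3 = 0 then 3 else 1 with hcz
  have hdvd : (3 ∣ (n + 4)) ↔ (n % 24 + 4) % 3 = 0 := by omega
  have hcQ : (if 3 ∣ (n + 4) then (3:ℚ) else 1) = (cz : ℚ) := by
    rw [hcz]; by_cases h : 3 ∣ (n + 4)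
    · rw [if_pos h, if_pos (hdvd.mp h)]; norm_num
    · rw [if_neg h, if_neg (fun hh => h (hdvd.mpr hh))]; norm_num
  have hcZ : ((cz : ℤ) : ZMod 5) = (if (n % 24 + 4) % 3 = 0 then (3:ZMod 5) else 1) := by
    rw [hcz]; split_ifs <;> norm_num
  refine ⟨(a3*a1*b2^2 - cz*a2^2*b3*b1)*b0*fInv (n % 24),
          b3*b1*b2^2*a0*fInv (n % 24), ?_, ?_, ?_⟩
  · rw [echo, e0, e1, e2, e3, hcQ]
    have c0 : (b0:ℚ) ≠ 0 := Int.cast_ne_zero.mpr hb0'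
    have c1 : (b1:ℚ) ≠ 0 := Int.cast_ne_zero.mpr hb1'
    have c2 : (b2:ℚ) ≠ 0 := Int.cast_ne_zero.mpr hb2'
    have c3 : (b3:ℚ) ≠ 0 := Int.cast_ne_zero.mpr hb3'
    have ca : (a0:ℚ) ≠ 0 := Int.cast_ne_zero.mpr ha0'
    have cu : ((fInv (n % 24) : ℤ):ℚ) ≠ 0 := Int.cast_ne_zero.mpr hu'
    push_cast
    field_simp
  · have m1 : (n+1) % 24 = (n % 24 + 1) % 24 := by omega
    have m2 : (n+2) % 24 = (n % 24 + 2) % 24 := by omega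
    have m3 : (n+3) % 24 = (n % 24 + 3) % 24 := by omega
    have m4 : (n+4) % 24 = (n % 24 + 4) % 24 := by omega
    rw [m1] at ha1; rw [m2] at ha2; rw [m3] at ha3
    rw [m4]
    push_cast
    rw [ha1, ha2, ha3, hb0, hb1, hb2, hb3, hcZ]
    have := f5_rec (n % 24) hm
    linear_combination this
  · push_cast
    rw [ha0, hb1, hb2, hb3]
    linear_combination hu

lemma einv_all : ∀ n, EInv n := by
  have base : ∀ k, k < 4 → EInv k := by
    intro k hk
    interval_cases k
    · exact ⟨1, 1, by norm_num [echo], by decide, by decide⟩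
    · exact ⟨1, 1, by norm_num [echo], by decide, by decide⟩
    · exact ⟨2, 1, by norm_num [echo], by decide, by decide⟩
    · exact ⟨1, 1, by norm_num [echo], by decide, by decide⟩
  have key : ∀ n, EInv n ∧ EInv (n+1) ∧ EInv (n+2) ∧ EInv (n+3) := by
    intro n
    induction n with
    | zero => exact ⟨base 0 (by norm_num), base 1 (by norm_num), base 2 (by norm_num),
        base 3 (by norm_num)⟩
    | succ m ih => exact ⟨ih.2.1, ih.2.2.1, ih.2.2.2, step m ih.1 ih.2.1 ih.2.2.1 ih.2.2.2⟩
  exact fun n => (key n).1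

lemma cross (q : ℚ) (a b : ℤ) (hb : b ≠ 0) (h : q = (a:ℚ)/(b:ℚ)) :
    q.num * b = a * q.den := by
  have hbQ : (b:ℚ) ≠ 0 := Int.cast_ne_zero.mpr hb
  have hd : (q.den : ℚ) ≠ 0 := by exact_mod_cast q.den_ne_zero
  have hq : (q.num : ℚ) / (q.den : ℚ) = (a:ℚ)/(b:ℚ) := by rw [Rat.num_div_den]; exact h
  have : (q.num : ℚ) * b = a * q.den := by
    field_simp at hq; linarith
  exact_mod_cast this

lemma five_not_dvd {a : ℤ} (h : (a : ZMod 5) ≠ 0) : ¬ (5:ℤ) ∣ a := by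
  intro hd
  apply h
  rw [ZMod.intCast_zmod_eq_zero_iff_dvd]
  exact_mod_cast hd

/-- No term of the ECHO sequence is divisible by 5, and the sequence is periodic modulo 5
with period 24. -/
theorem echo_not_div_five_and_periodic :
    (∀ n : ℕ, ¬ (5 : ℤ) ∣ (echo n).num) ∧
      ∀ n : ℕ, (5 : ℤ) ∣ (echo (n + 24) - echo n).num := by
  constructor
  · intro n
    obtain ⟨a, b, he, ha, hb⟩ := einv_all n
    have hm : n % 24 < 24 := Nat.mod_lt _ (by norm_num)
    have hbne : b ≠ 0 := cast_ne_of_zmod (hb ▸ one_ne)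
    have hane : ¬ (5:ℤ) ∣ a := five_not_dvd (ha ▸ f5_ne _ hm)
    have hbnd : ¬ (5:ℤ) ∣ b := five_not_dvd (hb ▸ one_ne)
    have hc := cross (echo n) a b hbne he
    intro hdvd
    have h5 : Prime (5:ℤ) := by norm_num
    have : (5:ℤ) ∣ a * (echo n).den := hc ▸ Dvd.dvd.mul_right hdvd b
    rcases h5.dvd_mul.mp this with h | h
    · exact hane h
    · -- 5 ∣ den, but coprime with num which is divisible by 5
      have hcop := (echo n).reduced
      have h5n : (5:ℕ) ∣ (echo n).num.natAbs := Int.natAbs_dvd_natAbs.mpr hdvd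
      have h5d : (5:ℕ) ∣ (echo n).den := by exact_mod_cast Int.ofNat_dvd.mp (by exact_mod_cast h)
      have := Nat.dvd_gcd h5n h5d
      rw [Nat.Coprime] at hcop
      omega
  · intro n
    obtain ⟨a, b, he, ha, hb⟩ := einv_all n
    obtain ⟨a', b', he', ha', hb'⟩ := einv_all (n + 24)
    have hmod : (n + 24) % 24 = n % 24 := by omega
    rw [hmod] at ha'
    have hbne : b ≠ 0 := cast_ne_of_zmod (hb ▸ one_ne)
    have hbne' : b' ≠ 0 := cast_ne_of_zmod (hb' ▸ one_ne)
    set d := echo (n + 24) - echo n with hd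
    have hde : d = ((a' * b - a * b' : ℤ) : ℚ) / ((b * b' : ℤ) : ℚ) := by
      rw [hd, he, he']
      have c1 : (b:ℚ) ≠ 0 := Int.cast_ne_zero.mpr hbne
      have c2 : (b':ℚ) ≠ 0 := Int.cast_ne_zero.mpr hbne'
      push_cast
      field_simp
    have hbb : b * b' ≠ 0 := mul_ne_zero hbne hbne'
    have hc := cross d (a' * b - a * b') (b * b') hbb hde
    have hN : (5:ℤ) ∣ (a' * b - a * b') := by
      have hz : ((a' * b - a * b' : ℤ) : ZMod 5) = 0 := by
        push_cast
        rw [ha, ha', hb, hb']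
        ring
      rw [ZMod.intCast_zmod_eq_zero_iff_dvd] at hz
      exact_mod_cast hz
    have h5 : Prime (5:ℤ) := by norm_num
    have : (5:ℤ) ∣ d.num * (b * b') := hc ▸ Dvd.dvd.mul_right hN d.den
    rcases h5.dvd_mul.mp this with h | h
    · exact h
    · rcases h5.dvd_mul.mp h with h' | h'
      · exact absurd h' (five_not_dvd (hb ▸ one_ne))
      · exact absurd h' (five_not_dvd (hb' ▸ one_ne))
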